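/- Torus case of Lemma 2.2 (equidistribution of the full sequence when the factorisation has G' = G): There is a constant C ≥ 1 depending only on m such that the following holds whenever A ≥ 2C, M ≥ 2, and N is sufficiently large in terms of M and A. Suppose g, ε, g', γ : ℕ → 𝕋^m satisfy g(n) = ε(n) + g'(n) + γ(n) for all 1 ≤ n ≤ N, where ε is (M,N)-smooth, γ is periodic with some period at most M, and the finite sequence (g'(n))_{n ≤ N} is totally M^{−A}-equidistributed in 𝕋^m. Then the finite sequence (g(n))_{n ≤ N} is totally M^{−A/(2C)}-equidistributed in 𝕋^m. -/

import Mathlib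

open MeasureTheory

noncomputable section

instance : Fact ((0:ℝ) < 1) := ⟨one_pos⟩

/-- The `m`-dimensional torus `(ℝ/ℤ)^m`. -/
abbrev Torus (m : ℕ) := Fin m → AddCircle (1:ℝ)

/-- The Lipschitz norm of `F : 𝕋^m → ℝ`: sup-norm plus the best Lipschitz constant. -/
def lipNorm {m : ℕ} (F : Torus m → ℝ) : ℝ :=
  (⨆ x, |F x|) + sInf {L : ℝ | 0 ≤ L ∧ LipschitzWith (Real.toNNReal L) F}

/-- `(u(n))_{n ≤ N}` is totally `δ`-equidistributed in `𝕋^m`: for every arithmetic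
progression `P ⊆ {1,…,N}` of cardinality at least `δ·N` and every Lipschitz `F` the sum of
`F ∘ u` over `P` is within `δ·‖F‖_Lip·|P|` of `|P|·∫ F dμ`. -/
def TotallyEquidistributed (m N : ℕ) (δ : ℝ) (u : ℕ → Torus m) : Prop :=
  ∀ a d len : ℕ, 0 < d → 0 < len →
    (∀ n < len, 1 ≤ a + n * d ∧ a + n * d ≤ N) →
    δ * N ≤ len →
    ∀ (F : Torus m → ℝ) (L : NNReal), LipschitzWith L F →
      |(∑ n ∈ Finset.range len, F (u (a + n * d))) - len * ∫ x, F x| ≤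
        δ * lipNorm F * len

/-- `ε : ℕ → 𝕋^m` is `(M,N)`-smooth. -/
def SmoothN (m : ℕ) (M : ℝ) (N : ℕ) (ε : ℕ → Torus m) : Prop :=
  ∀ n : ℕ, 1 ≤ n → n ≤ N →
    dist (ε n) 0 ≤ M ∧ dist (ε n) (ε (n - 1)) ≤ M / N

instance torusProb (m : ℕ) : IsProbabilityMeasure (volume : Measure (Torus m)) := by
  have h1 : IsProbabilityMeasure (volume : Measure (AddCircle (1:ℝ))) :=
    ⟨by simp [AddCircle.measure_univ]⟩
  have : (volume : Measure (Torus m)) = Measure.pi fun _ => volume := rfl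
  rw [this]; infer_instance

-- arithmetic helper
lemma ap_mem_iff {q s len j : ℕ} (hq : 0 < q) :
    s + j * q < len ↔ j < (len + q - 1 - s) / q := by
  constructor
  · intro h
    have h1 : (j + 1) ≤ (len + q - 1 - s) / q := by
      rw [Nat.le_div_iff_mul_le hq]
      have h3 : (j + 1) * q = j * q + q := by ring
      omega
    omega
  · intro h
    have h1 : (j + 1) * q ≤ ((len + q - 1 - s) / q) * q :=
      Nat.mul_le_mul_right _ h
    have h2 : ((len + q - 1 - s) / q) * q ≤ len + q - 1 - s := Nat.div_mul_le_self _ _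
    have h3 : (j + 1) * q = j * q + q := by ring
    omega

-- translation is Lipschitz-preserving
lemma lip_translate {m : ℕ} {F : Torus m → ℝ} {K : NNReal} (c : Torus m)
    (h : LipschitzWith K F) : LipschitzWith K (fun y => F (c + y)) := by
  simpa [Function.comp_def] using h.comp (isometry_add_left c).lipschitz

lemma lipset_translate {m : ℕ} (F : Torus m → ℝ) (c : Torus m) :
    {L : ℝ | 0 ≤ L ∧ LipschitzWith (Real.toNNReal L) (fun y => F (c + y))}
      = {L : ℝ | 0 ≤ L ∧ LipschitzWith (Real.toNNReal L) F} := by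
  ext L
  simp only [Set.mem_setOf_eq, and_congr_right_iff]
  intro _
  constructor
  · intro h
    have h2 := lip_translate (-c) h
    have : F = fun x => F (c + (-c + x)) := by funext x; simp
    rw [this]; exact h2
  · exact lip_translate c

lemma sup_translate {m : ℕ} (F : Torus m → ℝ) (c : Torus m) :
    (⨆ y, |F (c + y)|) = ⨆ x, |F x| := by
  have : Set.range (fun y => |F (c + y)|) = Set.range (fun x => |F x|) := by
    ext t
    constructor
    · rintro ⟨y, rfl⟩; exact ⟨c + y, rfl⟩
    · rintro ⟨x, rfl⟩; exact ⟨-c + x, by simp⟩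
  rw [iSup, iSup, this]

lemma lipNorm_translate {m : ℕ} (F : Torus m → ℝ) (c : Torus m) :
    lipNorm (fun y => F (c + y)) = lipNorm F := by
  rw [lipNorm, lipNorm, sup_translate, lipset_translate]

lemma integral_translate {m : ℕ} (F : Torus m → ℝ) (c : Torus m) :
    ∫ y, F (c + y) = ∫ x, F x := integral_add_left_eq_self F c

-- the set of Lipschitz constants
def lipSet {m : ℕ} (F : Torus m → ℝ) : Set ℝ :=
  {L : ℝ | 0 ≤ L ∧ LipschitzWith (Real.toNNReal L) F}

lemma lipSet_bddBelow {m : ℕ} (F : Torus m → ℝ) : BddBelow (lipSet F) :=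
  ⟨0, fun _ hx => hx.1⟩

lemma lipSet_mem {m : ℕ} {F : Torus m → ℝ} {L : NNReal} (h : LipschitzWith L F) :
    (L : ℝ) ∈ lipSet F := ⟨L.coe_nonneg, by rwa [Real.toNNReal_coe]⟩

lemma sInf_lipSet_nonneg {m : ℕ} {F : Torus m → ℝ} {L : NNReal} (h : LipschitzWith L F) :
    0 ≤ sInf (lipSet F) :=
  le_csInf ⟨L, lipSet_mem h⟩ fun _ hx => hx.1

lemma lip_sInf {m : ℕ} {F : Torus m → ℝ} {L : NNReal} (h : LipschitzWith L F) :
    ∀ x y : Torus m, dist (F x) (F y) ≤ sInf (lipSet F) * dist x y := by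
  intro x y
  rcases eq_or_lt_of_le (dist_nonneg (x := x) (y := y)) with hxy | hxy
  · have hxy2 : x = y := dist_eq_zero.mp hxy.symm
    subst hxy2
    simp
  · rw [← div_le_iff₀ hxy]
    apply le_csInf ⟨(L : ℝ), lipSet_mem h⟩
    intro b hb
    rw [div_le_iff₀ hxy]
    have := hb.2.dist_le_mul x y
    rwa [Real.coe_toNNReal _ hb.1] at this

lemma sInf_lipSet_le_lipNorm {m : ℕ} {F : Torus m → ℝ} {L : NNReal} (h : LipschitzWith L F) :
    sInf (lipSet F) ≤ lipNorm F := by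
  have h1 : 0 ≤ ⨆ x, |F x| := Real.iSup_nonneg fun x => abs_nonneg _
  have : lipNorm F = (⨆ x, |F x|) + sInf (lipSet F) := rfl
  rw [this]; linarith

lemma abs_le_sup {m : ℕ} {F : Torus m → ℝ} {L : NNReal} (h : LipschitzWith L F)
    (x : Torus m) : |F x| ≤ ⨆ y, |F y| := by
  apply le_ciSup (f := fun y => |F y|) _ x
  exact (isCompact_range (h.continuous.abs)).bddAbove

lemma sup_le_lipNorm {m : ℕ} {F : Torus m → ℝ} {L : NNReal} (h : LipschitzWith L F) :
    (⨆ y, |F y|) ≤ lipNorm F := by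
  have h1 := sInf_lipSet_nonneg h
  have : lipNorm F = (⨆ x, |F x|) + sInf (lipSet F) := rfl
  rw [this]; linarith

lemma lipNorm_nonneg {m : ℕ} {F : Torus m → ℝ} {L : NNReal} (h : LipschitzWith L F) :
    0 ≤ lipNorm F :=
  le_trans (Real.iSup_nonneg fun x => abs_nonneg _) (sup_le_lipNorm h)

lemma abs_integral_le_sup {m : ℕ} {F : Torus m → ℝ} {L : NNReal} (h : LipschitzWith L F) :
    |∫ x, F x| ≤ ⨆ y, |F y| := by
  have := norm_integral_le_of_norm_le_const (μ := (volume : Measure (Torus m)))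
    (C := ⨆ y, |F y|) (f := F) (Filter.Eventually.of_forall fun x => by
      simpa using abs_le_sup h x)
  simpa using this

-- periodicity
lemma periodic_mul {γ : ℕ → α} {q : ℕ} (hγ : ∀ n, γ (n + q) = γ n) (x k : ℕ) :
    γ (x + k * q) = γ x := by
  induction k with
  | zero => simp
  | succ k ih => have : x + (k+1) * q = (x + k * q) + q := by ring
                 rw [this, hγ, ih]


lemma smooth_acc {m : ℕ} {M : ℝ} {N : ℕ} {ε : ℕ → Torus m} (hsm : SmoothN m M N ε)
    (s : ℕ) (hs : 1 ≤ s) :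
    ∀ t : ℕ, s ≤ t → t ≤ N → dist (ε t) (ε s) ≤ ((t : ℝ) - s) * (M / N) := by
  intro t ht
  induction t, ht using Nat.le_induction with
  | base => intro _; simp
  | succ t ht ih =>
    intro hN
    have h1 := (hsm (t + 1) (by omega) hN).2
    have h2 : (t + 1) - 1 = t := by omega
    rw [h2] at h1
    have h3 := ih (by omega)
    calc dist (ε (t+1)) (ε s) ≤ dist (ε (t+1)) (ε t) + dist (ε t) (ε s) := dist_triangle _ _ _
      _ ≤ M / N + ((t : ℝ) - s) * (M / N) := add_le_add h1 h3
      _ = ((t + 1 : ℕ) - (s:ℝ)) * (M / N) := by push_cast; ring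

lemma fiber_eq (q B len r b : ℕ) (hq : 0 < q) (hB : 0 < B) (hr : r < q) :
    (Finset.range len).filter (fun n => (n % q, n / q / B) = (r, b))
      = Finset.image (fun j => (r + b * B * q) + j * q)
          (Finset.range (min B ((len + q - 1 - (r + b * B * q)) / q))) := by
  ext n
  simp only [Finset.mem_filter, Finset.mem_range, Finset.mem_image, Prod.mk.injEq]
  constructor
  · rintro ⟨hn, hmod, hdiv⟩
    have h1 : b * B + (n / q) % B = n / q := by
      rw [← hdiv, Nat.mul_comm]; exact Nat.div_add_mod _ _
    have h2 : (n / q) % B < B := Nat.mod_lt _ hB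
    have e1 : b * B * q + (n / q - b * B) * q = (n / q) * q := by
      rw [← Nat.add_mul]; congr 1; omega
    have e2 : q * (n / q) + n % q = n := Nat.div_add_mod n q
    have e3 : (n / q) * q = q * (n / q) := Nat.mul_comm _ _
    refine ⟨n / q - b * B, ?_, by omega⟩
    rw [lt_min_iff]
    refine ⟨by omega, ?_⟩
    rw [← ap_mem_iff hq]
    omega
  · rintro ⟨j, hj, rfl⟩
    rw [lt_min_iff, ← ap_mem_iff hq] at hj
    refine ⟨hj.2, ?_, ?_⟩
    · have e : r + b * B * q + j * q = r + (b * B + j) * q := by ring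
      rw [e, Nat.add_mul_mod_self_right, Nat.mod_eq_of_lt hr]
    · have e : r + b * B * q + j * q = r + (b * B + j) * q := by ring
      rw [e, Nat.add_mul_div_right _ _ hq, Nat.div_eq_of_lt hr, Nat.zero_add]
      have e2 : b * B + j = B * b + j := by ring
      rw [e2, Nat.mul_add_div hB, Nat.div_eq_of_lt hj.1]
      omega

lemma sup_nonneg' {m : ℕ} (F : Torus m → ℝ) : 0 ≤ ⨆ y, |F y| :=
  Real.iSup_nonneg fun _ => abs_nonneg _

set_option maxHeartbeats 1000000

/-- **Torus case of Lemma 2.2**: if `g = ε + g' + γ` with `ε` smooth, `γ` periodic with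
period at most `M` and `g'` totally `M⁻ᴬ`-equidistributed, then `g` itself is totally
`M^{-A/(2C)}`-equidistributed, for some `C = C(m) ≥ 1`, provided `A ≥ 2C`, `M ≥ 2` and `N`
is sufficiently large in terms of `M` and `A`. -/
theorem torus_equidistribution_of_factorisation (m : ℕ) (hm : 0 < m) :
    ∃ C : ℝ, 1 ≤ C ∧
      ∀ A M : ℝ, 2 * C ≤ A → 2 ≤ M →
        ∃ N₀ : ℕ, ∀ N : ℕ, N₀ ≤ N →
          ∀ g ε g' γ : ℕ → Torus m,
            (∀ n : ℕ, 1 ≤ n → n ≤ N → g n = ε n + g' n + γ n) →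
            SmoothN m M N ε →
            (∃ q : ℕ, 1 ≤ q ∧ (q : ℝ) ≤ M ∧ ∀ n : ℕ, γ (n + q) = γ n) →
            TotallyEquidistributed m N (M ^ (-A)) g' →
            TotallyEquidistributed m N (M ^ (-(A / (2 * C)))) g := by
  have := torusProb m
  refine ⟨10, by norm_num, ?_⟩
  intro A M hA hM
  have hM0 : (0:ℝ) < M := by linarith
  have hM1 : (1:ℝ) < M := by linarith
  have hA20 : (20:ℝ) ≤ A := by linarith
  have gap : ∀ x y : ℝ, x ≤ y → M ^ x ≤ M ^ y :=
    fun x y h => (Real.rpow_le_rpow_left_iff hM1).mpr h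
  obtain ⟨δ, hδdef⟩ : ∃ δ : ℝ, δ = M ^ (-(A / (2 * 10))) := ⟨_, rfl⟩
  obtain ⟨δ', hδ'def⟩ : ∃ δ' : ℝ, δ' = M ^ (-A) := ⟨_, rfl⟩
  have hδpos : 0 < δ := hδdef ▸ Real.rpow_pos_of_pos hM0 _
  have hδ'pos : 0 < δ' := hδ'def ▸ Real.rpow_pos_of_pos hM0 _
  have hδ1 : δ ≤ 1 := hδdef ▸ Real.rpow_le_one_of_one_le_of_nonpos hM1.le (by linarith)
  refine ⟨⌈(100:ℝ) * M ^ (2*A)⌉₊, ?_⟩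
  intro N hN g ε g' γ hg hsm hper heq
  obtain ⟨q, hq1, hqM, hγ⟩ := hper
  have hq0 : 0 < q := hq1
  rw [← hδ'def] at heq
  intro a d len hd hlen hrange hlenN F L hLipF
  rw [← hδdef] at hlenN
  -- basic size facts
  have hNR : (100:ℝ) * M ^ (2*A) ≤ N := le_trans (Nat.le_ceil _) (Nat.cast_le.mpr hN)
  have hMA1 : (1:ℝ) ≤ M ^ (2*A) := by
    have := gap 0 (2*A) (by linarith)
    rwa [Real.rpow_zero] at this
  have hNpos : (0:ℝ) < N := by nlinarith
  have hδN : (100:ℝ) ≤ δ * N := by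
    have e1 : δ * (100 * M ^ (2*A)) = 100 * M ^ (2*A - A/(2*10)) := by
      rw [hδdef, ← mul_assoc, mul_comm (M ^ (-(A / (2 * 10)))) 100, mul_assoc,
        ← Real.rpow_add hM0]
      congr 1
      ring
    have e2 : (1:ℝ) ≤ M ^ (2*A - A/(2*10)) := by
      have := gap 0 (2*A - A/(2*10)) (by linarith)
      rwa [Real.rpow_zero] at this
    nlinarith [mul_le_mul_of_nonneg_left hNR hδpos.le]
  have hlenR : δ * N ≤ (len:ℝ) := hlenN
  have hlen100 : (100:ℝ) ≤ (len:ℝ) := le_trans hδN hlenR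
  have hlen3 : 3 ≤ len := by exact_mod_cast (le_trans (by norm_num) hlen100 : (3:ℝ) ≤ (len:ℝ))
  -- K and B
  obtain ⟨K, hKdef⟩ : ∃ K : ℕ, K = ⌈(12:ℝ) * M^(2:ℕ) / δ⌉₊ := ⟨_, rfl⟩
  have hK1 : (12:ℝ) * M^(2:ℕ) / δ ≤ K := hKdef ▸ Nat.le_ceil _
  have hKposR : (0:ℝ) < K := lt_of_lt_of_le (by positivity) hK1
  have hKpos : 0 < K := by exact_mod_cast hKposR
  have hK2 : (K:ℝ) ≤ 13 * M^(2:ℕ) / δ := by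
    have h1 : (K:ℝ) < 12 * M^(2:ℕ) / δ + 1 :=
      hKdef ▸ Nat.ceil_lt_add_one (by positivity : (0:ℝ) ≤ 12 * M^(2:ℕ) / δ)
    have h2 : (1:ℝ) ≤ M^(2:ℕ) / δ := by
      rw [le_div_iff₀ hδpos]
      nlinarith
    have h3 : 13 * M^(2:ℕ) / δ = 12 * M^(2:ℕ) / δ + M^(2:ℕ) / δ := by ring
    linarith
  obtain ⟨B, hBdef⟩ : ∃ B : ℕ, B = len / K + 1 := ⟨_, rfl⟩
  have hBpos : 0 < B := hBdef ▸ Nat.succ_pos _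
  have hlenKB : len < K * B := by
    have h1 : len / K < len / K + 1 := Nat.lt_succ_self _
    rw [Nat.div_lt_iff_lt_mul hKpos] at h1
    rw [hBdef, mul_comm]
    exact h1
  have hBR : (B:ℝ) ≤ (len:ℝ)/(K:ℝ) + 1 := by
    rw [hBdef]
    push_cast
    have := Nat.cast_div_le (α := ℝ) (m := len) (n := K)
    linarith
  -- progression step facts
  have ha1 : 1 ≤ a := by
    have := hrange 0 (by omega)
    omega
  have haN : a + (len - 1) * d ≤ N := (hrange (len - 1) (by omega)).2
  have hd1 : (1:ℝ) ≤ (d:ℝ) := by exact_mod_cast hd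
  have hdN : (d:ℝ) * ((len:ℝ) - 1) ≤ (N:ℝ) - 1 := by
    have h0 := (hrange 0 (by omega)).1
    have hnat : (len - 1) * d ≤ N - 1 := by omega
    have hc : (((len - 1) * d : ℕ) : ℝ) ≤ ((N - 1 : ℕ) : ℝ) := Nat.cast_le.mpr hnat
    have hN1 : 1 ≤ N := by omega
    rw [Nat.cast_mul, Nat.cast_sub (by omega : 1 ≤ len), Nat.cast_sub hN1] at hc
    push_cast at hc ⊢
    linarith [mul_comm (d:ℝ) ((len:ℝ)-1)]
  -- abbreviations
  obtain ⟨LB, hLBdef⟩ : ∃ LB : ℝ, LB = sInf (lipSet F) := ⟨_, rfl⟩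
  obtain ⟨supF, hsupFdef⟩ : ∃ s : ℝ, s = ⨆ y, |F y| := ⟨_, rfl⟩
  obtain ⟨LF, hLFdef⟩ : ∃ l : ℝ, l = lipNorm F := ⟨_, rfl⟩
  have hLB0 : 0 ≤ LB := hLBdef ▸ sInf_lipSet_nonneg hLipF
  have hLBle : LB ≤ LF := hLBdef ▸ hLFdef ▸ sInf_lipSet_le_lipNorm hLipF
  have hsupF0 : 0 ≤ supF := hsupFdef ▸ sup_nonneg' F
  have hsupFle : supF ≤ LF := hsupFdef ▸ hLFdef ▸ sup_le_lipNorm hLipF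
  have hLF0 : 0 ≤ LF := hLFdef ▸ lipNorm_nonneg hLipF
  obtain ⟨η, hηdef⟩ : ∃ η : ℝ, η = (B:ℝ) * ((q:ℝ) * (d:ℝ)) * (M / N) := ⟨_, rfl⟩
  have hη0 : 0 ≤ η := by rw [hηdef]; positivity
  -- main numeric bounds
  have hlend : (len:ℝ) * d ≤ 2 * N := by
    have e2 : (0:ℝ) ≤ (d:ℝ) * ((len:ℝ) - 2) :=
      mul_nonneg (by linarith) (by linarith)
    linarith [hdN, e2]
  have hη : η ≤ δ/3 := by
    have hMN0 : (0:ℝ) ≤ M/N := by positivity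
    have t1 : η ≤ ((len:ℝ)/K + 1)*((q:ℝ)*d)*(M/N) := by
      rw [hηdef]
      gcongr
    have hT1 : ((len:ℝ)/K)*((q:ℝ)*d)*(M/N) ≤ δ/6 := by
      have e0 : ((len:ℝ)/K)*((q:ℝ)*d)*(M/N) = ((len:ℝ)*d*((q:ℝ)*M))/((K:ℝ)*N) := by
        field_simp
      rw [e0, div_le_div_iff₀ (by positivity) (by norm_num : (0:ℝ) < 6)]
      have i1 : (len:ℝ)*d*((q:ℝ)*M) ≤ (2*N)*(M*M) :=
        mul_le_mul hlend (mul_le_mul_of_nonneg_right hqM hM0.le)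
          (by positivity) (by positivity)
      have i2 : 12*(M*M) ≤ δ*K := by
        have h5 := mul_le_mul_of_nonneg_left hK1 hδpos.le
        rw [mul_comm δ ((12:ℝ) * M^(2:ℕ) / δ), div_mul_cancel₀ _ (ne_of_gt hδpos)] at h5
        have h6 : (12:ℝ)*M^(2:ℕ) = 12*(M*M) := by ring
        linarith
      have i3 := mul_le_mul_of_nonneg_right i2 hNpos.le
      linarith
    have hT2 : ((q:ℝ)*d)*(M/N) ≤ δ/6 := by
      have hdδ : (d:ℝ)*δ ≤ 2 := by
        have hl1 : δ*N/2 ≤ (len:ℝ) - 1 := by linarith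
        have h2 : (d:ℝ)*(δ*N/2) ≤ (d:ℝ)*((len:ℝ)-1) :=
          mul_le_mul_of_nonneg_left hl1 (by linarith)
        exact (mul_le_mul_iff_left₀ hNpos).mp (by linarith : (d:ℝ)*δ*(N:ℝ) ≤ 2*N)
      have hδ2N : 12*(M*M) ≤ δ*δ*N := by
        have e1 : δ*δ = M^(-(A/(2*10)) + -(A/(2*10))) := by
          rw [hδdef, ← Real.rpow_add hM0]
        have e2 : M^(-(A/(2*10)) + -(A/(2*10))) * M^(2*A) = M^(2*A - A/10) := by
          rw [← Real.rpow_add hM0]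
          congr 1
          ring
        have e3 : M^(((2:ℕ)):ℝ) ≤ M^(2*A - A/10) := gap _ _ (by push_cast; linarith)
        rw [Real.rpow_natCast, pow_two] at e3
        have e5 : δ*δ*(100*M^(2*A)) = 100*(M^(-(A/(2*10)) + -(A/(2*10))) * M^(2*A)) := by
          rw [e1]
          ring
        have e6 := mul_le_mul_of_nonneg_left hNR (by positivity : (0:ℝ) ≤ δ*δ)
        linarith [mul_nonneg hM0.le hM0.le]
      have e0 : (q:ℝ)*d*(M/N) = ((q:ℝ)*d*M)/(N:ℝ) := by ring
      rw [e0, div_le_div_iff₀ hNpos (by norm_num : (0:ℝ) < 6)]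
      have s0 : (q:ℝ)*((d:ℝ)*δ) ≤ M*2 :=
        mul_le_mul hqM hdδ (by positivity) hM0.le
      have s1 : ((q:ℝ)*((d:ℝ)*δ))*(M*6) ≤ (M*2)*(M*6) :=
        mul_le_mul_of_nonneg_right s0 (by positivity)
      exact (mul_le_mul_iff_left₀ hδpos).mp (by linarith : ((q:ℝ)*d*M*6)*δ ≤ (δ*(N:ℝ))*δ)
    have texp : ((len:ℝ)/K + 1)*((q:ℝ)*d)*(M/N)
        = ((len:ℝ)/K)*((q:ℝ)*d)*(M/N) + ((q:ℝ)*d)*(M/N) := by ring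
    linarith
  have hδ'δ : 3 * δ' ≤ δ := by
    have e1 : δ' * M^(A - A/(2*10)) = δ := by
      rw [hδ'def, hδdef, ← Real.rpow_add hM0]
      congr 1
      ring
    have e2 : (3:ℝ) ≤ M^(A - A/(2*10)) := by
      have g1 := gap (((2:ℕ)):ℝ) (A - A/(2*10)) (by push_cast; linarith)
      rw [Real.rpow_natCast, pow_two] at g1
      nlinarith
    have e3 := mul_le_mul_of_nonneg_left e2 hδ'pos.le
    linarith
  have hQK : ((q:ℝ) * K) * (2 * supF * (δ' * N)) ≤ (δ/3) * LF * len := by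
    have key : 78*((M*(M*M))*δ') ≤ δ*δ*δ := by
      have e1 : δ*δ*δ = M^(-(A/(2*10)) + -(A/(2*10)) + -(A/(2*10))) := by
        rw [hδdef, ← Real.rpow_add hM0, ← Real.rpow_add hM0]
      have e2 : M^(-(A/(2*10)) + -(A/(2*10)) + -(A/(2*10)))
          = M^((3:ℝ) + -A) * M^(-(A/(2*10)) + -(A/(2*10)) + -(A/(2*10)) - ((3:ℝ) + -A)) := by
        rw [← Real.rpow_add hM0]
        congr 1
        ring
      have e3 : M^((3:ℝ) + -A) = (M*(M*M))*δ' := by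
        rw [Real.rpow_add hM0, hδ'def]
        congr 1
        rw [show (3:ℝ) = (((3:ℕ)):ℝ) by norm_num, Real.rpow_natCast]
        ring
      have e4 : (78:ℝ) ≤ M^(-(A/(2*10)) + -(A/(2*10)) + -(A/(2*10)) - ((3:ℝ) + -A)) := by
        have g2 := gap (((14:ℕ)):ℝ) (-(A/(2*10)) + -(A/(2*10)) + -(A/(2*10)) - ((3:ℝ) + -A))
          (by push_cast; linarith)
        have g1 : (2:ℝ)^(((14:ℕ)):ℝ) ≤ M^(((14:ℕ)):ℝ) :=
          Real.rpow_le_rpow (by norm_num) hM (by positivity)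
        rw [Real.rpow_natCast 2] at g1
        norm_num at g1
        rw [Real.rpow_natCast] at g2
        linarith
      have e5 : (0:ℝ) ≤ (M*(M*M))*δ' := by
        have := hδ'pos.le
        positivity
      calc 78*((M*(M*M))*δ') = ((M*(M*M))*δ')*78 := by ring
        _ ≤ ((M*(M*M))*δ')*M^(-(A/(2*10)) + -(A/(2*10)) + -(A/(2*10)) - ((3:ℝ) + -A)) :=
            mul_le_mul_of_nonneg_left e4 e5
        _ = δ*δ*δ := by rw [← e3, ← e2, ← e1]
    have i0 : (K:ℝ)*δ ≤ 13*(M*M) := by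
      have h5 := mul_le_mul_of_nonneg_right hK2 hδpos.le
      rw [div_mul_cancel₀ _ (ne_of_gt hδpos)] at h5
      have h6 : (13:ℝ)*M^(2:ℕ) = 13*(M*M) := by ring
      linarith
    have i1 : (q:ℝ)*((K:ℝ)*δ) ≤ M*(13*(M*M)) := by
      apply mul_le_mul hqM i0 _ hM0.le
      have := mul_le_mul_of_nonneg_right hKposR.le hδpos.le
      positivity
    have c1 : (q:ℝ)*K*(2*δ') ≤ (δ/3)*δ := by
      have h3δ : (0:ℝ) < 3*δ := by linarith
      apply (mul_le_mul_iff_left₀ h3δ).mp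
      have h7 := mul_le_mul_of_nonneg_right i1 (by linarith : (0:ℝ) ≤ 6*δ')
      have h8 : ((δ/3)*δ)*(3*δ) = δ*δ*δ := by ring
      linarith
    have c2 : (q:ℝ)*K*(2*δ')*N ≤ (δ/3)*((len:ℝ)) := by
      have h9 := mul_le_mul_of_nonneg_right c1 hNpos.le
      have h10 : ((δ/3)*δ)*N = (δ/3)*(δ*N) := by ring
      have h11 : (δ/3)*(δ*N) ≤ (δ/3)*len :=
        mul_le_mul_of_nonneg_left hlenR (by positivity)
      linarith
    have cpos : (0:ℝ) ≤ (q:ℝ)*K*(2*δ') :=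
      mul_nonneg (mul_nonneg (Nat.cast_nonneg q) (Nat.cast_nonneg K)) (by linarith)
    calc ((q:ℝ) * K) * (2 * supF * (δ' * N)) = supF * ((q:ℝ)*K*(2*δ')*N) := by ring
      _ ≤ LF * ((δ/3)*len) := by
          apply mul_le_mul hsupFle c2 _ hLF0
          exact mul_nonneg cpos (Nat.cast_nonneg N)
      _ = (δ/3) * LF * len := by ring
  -- partition of the progression
  have hmaps : ∀ n ∈ Finset.range len,
      (n % q, n / q / B) ∈ Finset.range q ×ˢ Finset.range K := by
    intro n hn
    simp only [Finset.mem_product, Finset.mem_range] at *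
    refine ⟨Nat.mod_lt _ hq0, ?_⟩
    have h1 : n / q / B ≤ n / B := Nat.div_le_div_right (Nat.div_le_self n q)
    have h2 : n / B < K := by
      rw [Nat.div_lt_iff_lt_mul hBpos]
      calc n < len := hn
        _ < K * B := hlenKB
      -- n < K * B vs n < K * B? div_lt_iff_lt_mul: n / B < K ↔ n < K * B
    omega
  have hsplit := Finset.sum_fiberwise_of_maps_to hmaps (fun n => F (g (a + n * d)))
  have hcard := Finset.sum_fiberwise_of_maps_to hmaps (fun _ => (1:ℝ))
  simp only [Finset.sum_const, nsmul_eq_mul, mul_one, Finset.card_range] at hcard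
  -- per-fiber bound
  have hfib : ∀ p ∈ Finset.range q ×ˢ Finset.range K,
      |(∑ n ∈ (Finset.range len).filter (fun n => (n % q, n / q / B) = p),
          F (g (a + n * d)))
        - (((Finset.range len).filter (fun n => (n % q, n / q / B) = p)).card : ℝ)
            * ∫ x, F x|
      ≤ (((Finset.range len).filter (fun n => (n % q, n / q / B) = p)).card : ℝ)
          * (LB * η + δ' * LF) + 2 * supF * (δ' * N) := by
    rintro ⟨r, b⟩ hp
    simp only [Finset.mem_product, Finset.mem_range] at hp
    obtain ⟨hr, hb⟩ := hp
    rw [fiber_eq q B len r b hq0 hBpos hr]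
    obtain ⟨tc, htcdef⟩ : ∃ tc, tc = min B ((len + q - 1 - (r + b * B * q)) / q) := ⟨_, rfl⟩
    rw [← htcdef]
    have hinj : ∀ x ∈ Finset.range tc, ∀ y ∈ Finset.range tc,
        (r + b*B*q) + x*q = (r + b*B*q) + y*q → x = y := by
      intro x _ y _ hxy
      have h : x * q = y * q := by omega
      exact Nat.eq_of_mul_eq_mul_right hq0 h
    have hcardim : (Finset.image (fun j => (r + b*B*q) + j*q) (Finset.range tc)).card = tc := by
      rw [Finset.card_image_of_injOn (fun x hx y hy h => hinj x hx y hy h), Finset.card_range]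
    rw [Finset.sum_image hinj, hcardim]
    obtain ⟨a', ha'def⟩ : ∃ a', a' = a + (r + b*B*q)*d := ⟨_, rfl⟩
    have hxeq : ∀ j : ℕ, a + ((r + b*B*q) + j*q)*d = a' + j*(q*d) := by
      intro j
      rw [ha'def]
      ring
    rw [Finset.sum_congr rfl (fun j _ => by rw [hxeq j] :
      ∀ j ∈ Finset.range tc, F (g (a + ((r + b*B*q) + j*q)*d)) = F (g (a' + j*(q*d))))]
    have hjlen : ∀ j, j < tc → (r + b*B*q) + j*q < len := by
      intro j hj
      rw [htcdef, lt_min_iff] at hj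
      exact (ap_mem_iff hq0).mpr hj.2
    have hpt : ∀ j, j < tc → 1 ≤ a' + j*(q*d) ∧ a' + j*(q*d) ≤ N := by
      intro j hj
      have h := hrange _ (hjlen j hj)
      rw [hxeq j] at h
      exact h
    rcases Nat.eq_zero_or_pos tc with htc0 | htcpos
    · rw [htc0]
      simp only [Finset.range_zero, Finset.sum_empty, Nat.cast_zero, zero_mul, sub_zero,
        abs_zero]
      have h1 : (0:ℝ) ≤ 2 * supF * (δ' * N) :=
        mul_nonneg (by linarith) (mul_nonneg hδ'pos.le (Nat.cast_nonneg N))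
      linarith
    · have ha'1 : 1 ≤ a' := by
        have h := (hpt 0 htcpos).1
        simpa using h
      obtain ⟨G, hGdef⟩ : ∃ G : Torus m → ℝ, G = fun y => F ((ε a' + γ a') + y) := ⟨_, rfl⟩
      have hGLip : LipschitzWith L G := hGdef ▸ lip_translate _ hLipF
      have hGint : ∫ y, G y = ∫ x, F x := by rw [hGdef]; exact integral_translate F _
      have hGnorm : lipNorm G = lipNorm F := by rw [hGdef]; exact lipNorm_translate F _
      have hγc : ∀ j : ℕ, γ (a' + j*(q*d)) = γ a' := by
        intro j
        have e : a' + j*(q*d) = a' + (j*d)*q := by ring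
        rw [e, periodic_mul hγ]
      have hεd : ∀ j, j < tc → dist (ε (a' + j*(q*d))) (ε a') ≤ η := by
        intro j hj
        have h1 := smooth_acc hsm a' ha'1 (a' + j*(q*d)) (Nat.le_add_right _ _) (hpt j hj).2
        have h2 : ((a' + j*(q*d) : ℕ):ℝ) - (a':ℝ) = (j:ℝ)*((q:ℝ)*(d:ℝ)) := by
          push_cast
          ring
        rw [h2] at h1
        refine le_trans h1 ?_
        rw [hηdef]
        have hjB : (j:ℝ) ≤ (B:ℝ) := by
          have h3 : j < B := lt_of_lt_of_le hj (htcdef ▸ min_le_left _ _)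
          exact_mod_cast h3.le
        exact mul_le_mul_of_nonneg_right
          (mul_le_mul_of_nonneg_right hjB (by positivity)) (by positivity)
      have hptw : ∀ j, j < tc →
          |F (g (a' + j*(q*d))) - G (g' (a' + j*(q*d)))| ≤ LB * η := by
        intro j hj
        have hx1 := (hpt j hj).1
        have hx2 := (hpt j hj).2
        have hgx : g (a' + j*(q*d)) = ε (a' + j*(q*d)) + g' (a' + j*(q*d)) + γ a' := by
          rw [hg _ hx1 hx2, hγc j]
        have e1 : ε (a' + j*(q*d)) + g' (a' + j*(q*d)) + γ a'
            = ε (a' + j*(q*d)) + (γ a' + g' (a' + j*(q*d))) := by abel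
        have e2 : (ε a' + γ a') + g' (a' + j*(q*d))
            = ε a' + (γ a' + g' (a' + j*(q*d))) := by abel
        have hd2 : G (g' (a' + j*(q*d))) = F ((ε a' + γ a') + g' (a' + j*(q*d))) := by
          rw [hGdef]
        rw [hd2, ← Real.dist_eq]
        calc dist (F (g (a' + j*(q*d)))) (F ((ε a' + γ a') + g' (a' + j*(q*d))))
            ≤ LB * dist (g (a' + j*(q*d))) ((ε a' + γ a') + g' (a' + j*(q*d))) :=
              hLBdef ▸ lip_sInf hLipF _ _
          _ = LB * dist (ε (a' + j*(q*d))) (ε a') := by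
              rw [hgx, e1, e2, dist_add_right]
          _ ≤ LB * η := mul_le_mul_of_nonneg_left (hεd j hj) hLB0
      have split : (∑ j ∈ Finset.range tc, F (g (a' + j*(q*d)))) - (tc:ℝ) * ∫ x, F x
          = (∑ j ∈ Finset.range tc, (F (g (a' + j*(q*d))) - G (g' (a' + j*(q*d)))))
            + ((∑ j ∈ Finset.range tc, G (g' (a' + j*(q*d)))) - (tc:ℝ) * ∫ x, F x) := by
        rw [Finset.sum_sub_distrib]
        ring
      have hbound1 : |∑ j ∈ Finset.range tc,
          (F (g (a' + j*(q*d))) - G (g' (a' + j*(q*d))))| ≤ (tc:ℝ) * (LB * η) := by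
        refine le_trans (Finset.abs_sum_le_sum_abs _ _) ?_
        have h := Finset.sum_le_card_nsmul (Finset.range tc) _ (LB*η)
          (fun j hj => hptw j (Finset.mem_range.mp hj))
        simpa [Finset.card_range, nsmul_eq_mul] using h
      have hbound2 : |(∑ j ∈ Finset.range tc, G (g' (a' + j*(q*d)))) - (tc:ℝ) * ∫ x, F x|
          ≤ δ' * LF * tc + 2 * supF * (δ' * N) := by
        rcases le_or_gt (δ' * (N:ℝ)) (tc:ℝ) with hbig | hsmall
        · have happ := heq a' (q*d) tc (Nat.mul_pos hq0 hd) htcpos hpt hbig G L hGLip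
          rw [hGint, hGnorm, ← hLFdef] at happ
          have h1 : (0:ℝ) ≤ 2 * supF * (δ' * N) :=
            mul_nonneg (by linarith) (mul_nonneg hδ'pos.le (Nat.cast_nonneg N))
          linarith
        · have habs : ∀ j ∈ Finset.range tc, |G (g' (a' + j*(q*d)))| ≤ supF := by
            intro j _
            rw [hGdef, hsupFdef]
            exact abs_le_sup hLipF _
          have h1 : |∑ j ∈ Finset.range tc, G (g' (a' + j*(q*d)))| ≤ (tc:ℝ) * supF := by
            refine le_trans (Finset.abs_sum_le_sum_abs _ _) ?_
            have h := Finset.sum_le_card_nsmul (Finset.range tc) _ supF habs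
            simpa [Finset.card_range, nsmul_eq_mul] using h
          have h2 : |(tc:ℝ) * ∫ x, F x| ≤ (tc:ℝ) * supF := by
            rw [abs_mul, abs_of_nonneg (Nat.cast_nonneg tc : (0:ℝ) ≤ (tc:ℝ))]
            exact mul_le_mul_of_nonneg_left (hsupFdef ▸ abs_integral_le_sup hLipF)
              (Nat.cast_nonneg tc)
          have h3 : (tc:ℝ)*supF ≤ δ'*N*supF := mul_le_mul_of_nonneg_right hsmall.le hsupF0
          have h4 : (0:ℝ) ≤ δ'*LF*tc :=
            mul_nonneg (mul_nonneg hδ'pos.le hLF0) (Nat.cast_nonneg tc)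
          have h5 : |(∑ j ∈ Finset.range tc, G (g' (a' + j*(q*d)))) - (tc:ℝ) * ∫ x, F x|
              ≤ |∑ j ∈ Finset.range tc, G (g' (a' + j*(q*d)))| + |(tc:ℝ) * ∫ x, F x| := by
            have h6 := abs_add_le (∑ j ∈ Finset.range tc, G (g' (a' + j*(q*d))))
              (-((tc:ℝ) * ∫ x, F x))
            simpa [sub_eq_add_neg, abs_neg] using h6
          linarith
      calc |(∑ j ∈ Finset.range tc, F (g (a' + j*(q*d)))) - (tc:ℝ) * ∫ x, F x|
          ≤ |∑ j ∈ Finset.range tc, (F (g (a' + j*(q*d))) - G (g' (a' + j*(q*d))))|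
            + |(∑ j ∈ Finset.range tc, G (g' (a' + j*(q*d)))) - (tc:ℝ) * ∫ x, F x| := by
            rw [split]
            exact abs_add_le _ _
        _ ≤ (tc:ℝ) * (LB * η) + (δ' * LF * tc + 2 * supF * (δ' * N)) :=
            add_le_add hbound1 hbound2
        _ = (tc:ℝ) * (LB * η + δ' * LF) + 2 * supF * (δ' * N) := by ring
  -- assemble
  rw [← hδdef, ← hLFdef, ← hsplit]
  have hlenint : ((len:ℝ)) * ∫ x, F x
      = ∑ p ∈ Finset.range q ×ˢ Finset.range K,
          ((((Finset.range len).filter (fun n => (n % q, n / q / B) = p)).card : ℝ)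
            * ∫ x, F x) := by
    rw [← Finset.sum_mul, hcard]
  rw [hlenint, ← Finset.sum_sub_distrib]
  refine le_trans (Finset.abs_sum_le_sum_abs _ _) ?_
  refine le_trans (Finset.sum_le_sum hfib) ?_
  rw [Finset.sum_add_distrib, ← Finset.sum_mul, hcard, Finset.sum_const,
    Finset.card_product, Finset.card_range, Finset.card_range, nsmul_eq_mul]
  push_cast
  have f1 : LB * η ≤ LF * (δ/3) := mul_le_mul hLBle hη hη0 hLF0
  have f2 : δ' * LF ≤ (δ/3) * LF := by
    apply mul_le_mul_of_nonneg_right _ hLF0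
    linarith
  have f3 : (len:ℝ) * (LB * η + δ' * LF) ≤ (len:ℝ) * (LF * (δ/3) + (δ/3) * LF) :=
    mul_le_mul_of_nonneg_left (by linarith) (Nat.cast_nonneg len)
  have hQK' := hQK
  nlinarith [hQK', f3]
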